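/- Let A be a finite alphabet with |A| ≥ 2. Then for every k ∈ ℕ there exist n ∈ ℕ and a mutually unbordered set W ⊆ A^n with |W| ≥ k. -/

import Mathlib

/-- Auxiliary word construction: `a^p b^p y b` with `p = k+1`. -/
def stmt10f {A : Type*} (a b : A) (k : ℕ) (y : Fin k → A) (j : Fin (3 * (k + 1))) : A :=
  if (j : ℕ) < k + 1 then a else if (j : ℕ) < 2 * (k + 1) then b
  else if h : (j : ℕ) - 2 * (k + 1) < k then y ⟨(j : ℕ) - 2 * (k + 1), h⟩ else b

/-- Over any alphabet `A` with `|A| ≥ 2`, for every `k` there exist `n`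
and a mutually unbordered set `W ⊆ A^n` with `|W| ≥ k`. -/
theorem stmt10 {A : Type*} [Fintype A] [DecidableEq A]
    (hA : 2 ≤ Fintype.card A) (k : ℕ) :
    ∃ (n : ℕ) (W : Finset (Fin n → A)),
      k ≤ W.card ∧
      ∀ w ∈ W, ∀ w' ∈ W, ∀ t : ℕ, 0 < t → t < n →
        ∃ (i : ℕ) (h : t + i < n),
          w ⟨t + i, h⟩ ≠ w' ⟨i, lt_of_le_of_lt (Nat.le_add_left i t) h⟩ := by
  obtain ⟨a, b, hab⟩ := Fintype.exists_pair_of_one_lt_card (α := A) (by omega)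
  set p := k + 1 with hp
  set f : (Fin k → A) → (Fin (3 * p) → A) := stmt10f a b k with hf
  have hfa : ∀ y (j : Fin (3 * p)), (j : ℕ) < p → f y j = a := by
    intro y j hj
    simp only [hf, stmt10f]
    rw [if_pos hj]
  have hfb : ∀ y (j : Fin (3 * p)), p ≤ (j : ℕ) → (j : ℕ) < 2 * p → f y j = b := by
    intro y j h1 h2
    simp only [hf, stmt10f]
    rw [if_neg (by omega), if_pos h2]
  have hfb2 : ∀ y (j : Fin (3 * p)), (j : ℕ) = 3 * p - 1 → f y j = b := by
    intro y j hj
    simp only [hf, stmt10f]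
    rw [if_neg (by omega), if_neg (by omega), dif_neg (by omega)]
  have hinj : Function.Injective f := by
    intro y y' h
    funext i
    have := congrFun h ⟨2 * p + (i : ℕ), by omega⟩
    simp only [hf, stmt10f] at this
    have h1 : ¬ ((2 * p + (i : ℕ)) < p) := by omega
    have h2 : ¬ ((2 * p + (i : ℕ)) < 2 * p) := by omega
    have hik : 2 * p + (i : ℕ) - 2 * p < k := by omega
    rw [if_neg h1, if_neg h1, if_neg h2, if_neg h2, dif_pos hik, dif_pos hik] at this
    simpa [hp] using this
  refine ⟨3 * p, Finset.image f Finset.univ, ?_, ?_⟩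
  · rw [Finset.card_image_of_injective _ hinj, Finset.card_univ, Fintype.card_fun,
      Fintype.card_fin]
    calc k ≤ 2 ^ k := (Nat.lt_two_pow_self (n := k)).le
    _ ≤ Fintype.card A ^ k := Nat.pow_le_pow_left hA k
  · intro w hw w' hw' t ht htn
    obtain ⟨y, -, rfl⟩ := Finset.mem_image.mp hw
    obtain ⟨y', -, rfl⟩ := Finset.mem_image.mp hw'
    rcases lt_or_ge t p with h1 | h1
    · refine ⟨p - t, by omega, ?_⟩
      rw [hfb y ⟨t + (p - t), by omega⟩ (by simp only [Fin.val_mk]; omega) (by simp only [Fin.val_mk]; omega),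
        hfa y' _ (by simp only [Fin.val_mk]; omega)]
      exact hab.symm
    · rcases lt_or_ge t (2 * p) with h2 | h2
      · refine ⟨0, by omega, ?_⟩
        rw [hfb y ⟨t + 0, by omega⟩ (by simp only [Fin.val_mk]; omega) (by simp only [Fin.val_mk]; omega),
          hfa y' _ (by simp only [Fin.val_mk]; omega)]
        exact hab.symm
      · refine ⟨3 * p - 1 - t, by omega, ?_⟩
        rw [hfb2 y ⟨t + (3 * p - 1 - t), by omega⟩ (by simp only [Fin.val_mk]; omega),
          hfa y' _ (by simp only [Fin.val_mk]; omega)]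
        exact hab.symm
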